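/- Any maximizer of total capacity over lane assignments has at most one mixed lane: if α* = (α*₁,...,α*ₙ) ∈ [0,1]ⁿ maximizes C(α) = Σᵢ c(αᵢ) subject to the flow-conservation constraint Σᵢ (αᵢ - ᾱ)·c(αᵢ) = 0, then at most one coordinate of α* lies in the open interval (0,1). -/

import Mathlib

section SingleMixedLaneAux

variable (abar d L h hb : ℝ)

private lemma sml_denpos (hL : 0 < L) (hhb : 0 ≤ hb) (hbh : hb < h) {x : ℝ}
    (hx0 : 0 ≤ x) (hx1 : x ≤ 1) :
    0 < L + x ^ 2 * hb + (1 - x ^ 2) * h := by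
  have hx2 : x ^ 2 ≤ 1 := by nlinarith
  nlinarith [mul_nonneg (sub_nonneg.2 hx2) (le_of_lt (sub_pos.2 hbh))]

private lemma sml_Epos (hL : 0 < L) (hhb : 0 ≤ hb) (hbh : hb < h)
    (ha0 : 0 ≤ abar) (ha1 : abar ≤ 1) {x y : ℝ}
    (hx0 : 0 ≤ x) (hx1 : x ≤ 1) (hy0 : 0 ≤ y) (hy1 : y ≤ 1) :
    0 < (L + h) + (h - hb) * (x * y) - abar * ((h - hb) * (x + y)) := by
  have hk : (0:ℝ) < h - hb := sub_pos.2 hbh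
  nlinarith [mul_nonneg (mul_nonneg (sub_nonneg.2 ha1) hk.le) (add_nonneg hx0 hy0),
    mul_nonneg (mul_nonneg hk.le (sub_nonneg.2 hx1)) (sub_nonneg.2 hy1)]

private lemma sml_fmono (hd : 0 < d) (hL : 0 < L) (hhb : 0 ≤ hb) (hbh : hb < h)
    (ha0 : 0 ≤ abar) (ha1 : abar ≤ 1)
    (c : ℝ → ℝ) (hc : ∀ α, c α = d / (L + α ^ 2 * hb + (1 - α ^ 2) * h))
    {x y : ℝ} (hx0 : 0 ≤ x) (hy1 : y ≤ 1) (hxy : x < y) :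
    (x - abar) * c x < (y - abar) * c y := by
  have hx1 : x ≤ 1 := by linarith
  have hy0 : 0 ≤ y := by linarith
  have hDx := sml_denpos L h hb hL hhb hbh hx0 hx1
  have hDy := sml_denpos L h hb hL hhb hbh hy0 hy1
  rw [hc, hc, mul_div_assoc', mul_div_assoc', div_lt_div_iff₀ hDx hDy]
  nlinarith [mul_pos (mul_pos hd (show (0:ℝ) < y - x by linarith))
    (sml_Epos abar L h hb hL hhb hbh ha0 ha1 hx0 hx1 hy0 hy1)]

private lemma sml_slope_id (hL : 0 < L) (hhb : 0 ≤ hb) (hbh : hb < h)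
    (c : ℝ → ℝ) (hc : ∀ α, c α = d / (L + α ^ 2 * hb + (1 - α ^ 2) * h))
    {x y : ℝ} (hx0 : 0 ≤ x) (hx1 : x ≤ 1) (hy0 : 0 ≤ y) (hy1 : y ≤ 1) :
    (c y - c x) * ((L + h) + (h - hb) * (x * y) - abar * ((h - hb) * (x + y)))
      = ((y - abar) * c y - (x - abar) * c x) * ((h - hb) * (x + y)) := by
  have hDx := (sml_denpos L h hb hL hhb hbh hx0 hx1).ne'
  have hDy := (sml_denpos L h hb hL hhb hbh hy0 hy1).ne'
  rw [hc, hc, mul_div_assoc', mul_div_assoc', div_sub_div _ _ hDy hDx, div_sub_div _ _ hDy hDx,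
    div_mul_eq_mul_div, div_mul_eq_mul_div, div_eq_div_iff (mul_ne_zero hDy hDx) (mul_ne_zero hDy hDx)]
  ring

private lemma sml_psimono (hL : 0 < L) (hhb : 0 ≤ hb) (hbh : hb < h)
    {p q r s : ℝ} (hp0 : 0 ≤ p) (hq0 : 0 ≤ q) (hr1 : r ≤ 1) (hs1 : s ≤ 1)
    (hpr : p < r) (hqs : q < s) :
    ((h - hb) * (p + q)) * ((L + h) + (h - hb) * (r * s) - abar * ((h - hb) * (r + s)))
      < ((h - hb) * (r + s)) * ((L + h) + (h - hb) * (p * q) - abar * ((h - hb) * (p + q))) := by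
  have hk : (0:ℝ) < h - hb := sub_pos.2 hbh
  have hr0 : 0 ≤ r := le_of_lt (lt_of_le_of_lt hp0 hpr)
  have hs0 : 0 ≤ s := le_of_lt (lt_of_le_of_lt hq0 hqs)
  have hp1 : p ≤ 1 := by linarith
  have hq1 : q ≤ 1 := by linarith
  have key : (p + q) * ((L + h) + (h - hb) * (r * s))
      < (r + s) * ((L + h) + (h - hb) * (p * q)) := by
    nlinarith [mul_pos hL (show (0:ℝ) < s - q by linarith),
      mul_pos hL (show (0:ℝ) < r - p by linarith),
      mul_nonneg (mul_nonneg hk.le (sub_nonneg.2 (mul_le_one₀ hp1 hr0 hr1 : p * r ≤ 1)))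
        (show (0:ℝ) ≤ s - q by linarith),
      mul_nonneg (mul_nonneg hk.le (sub_nonneg.2 (mul_le_one₀ hq1 hs0 hs1 : q * s ≤ 1)))
        (show (0:ℝ) ≤ r - p by linarith),
      mul_nonneg hhb (show (0:ℝ) ≤ s - q by linarith),
      mul_nonneg hhb (show (0:ℝ) ≤ r - p by linarith)]
  nlinarith [mul_lt_mul_of_pos_left key hk]

set_option maxHeartbeats 1000000 in
/-- Strict convexity of capacity as a function of the constraint value:
comparing slopes on two ordered intervals. -/
private lemma sml_slope_lt (hd : 0 < d) (hL : 0 < L) (hhb : 0 ≤ hb) (hbh : hb < h)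
    (ha0 : 0 ≤ abar) (ha1 : abar ≤ 1)
    (c : ℝ → ℝ) (hc : ∀ α, c α = d / (L + α ^ 2 * hb + (1 - α ^ 2) * h))
    {p q r s : ℝ} (hp0 : 0 ≤ p) (hq0 : 0 ≤ q) (hr1 : r ≤ 1) (hs1 : s ≤ 1)
    (hpq : p < q) (hrs : r < s) (hpr : p < r) (hqs : q < s)
    (heq : (q - abar) * c q - (p - abar) * c p
        = (s - abar) * c s - (r - abar) * c r) :
    c q - c p < c s - c r := by
  have hp1 : p ≤ 1 := by linarith
  have hq1 : q ≤ 1 := by linarith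
  have hr0 : 0 ≤ r := by linarith
  have hs0 : 0 ≤ s := by linarith
  have hE1 := sml_Epos abar L h hb hL hhb hbh ha0 ha1 hp0 hp1 hq0 hq1
  have hE2 := sml_Epos abar L h hb hL hhb hbh ha0 ha1 hr0 hr1 hs0 hs1
  have ht : 0 < (q - abar) * c q - (p - abar) * c p := by
    have := sml_fmono abar d L h hb hd hL hhb hbh ha0 ha1 c hc hp0 hq1 hpq
    linarith
  have id1 := sml_slope_id abar d L h hb hL hhb hbh c hc hp0 hp1 hq0 hq1
  have id2 := sml_slope_id abar d L h hb hL hhb hbh c hc hr0 hr1 hs0 hs1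
  rw [← heq] at id2
  have hpsi := sml_psimono abar L h hb hL hhb hbh hp0 hq0 hr1 hs1 hpr hqs
  -- combine: (c q - c p) * E1 = t * k(p+q), (c s - c r) * E2 = t * k(r+s),
  -- k(p+q) * E2 < k(r+s) * E1
  have e1 : c q - c p
      = ((q - abar) * c q - (p - abar) * c p) * ((h - hb) * (p + q))
        / ((L + h) + (h - hb) * (p * q) - abar * ((h - hb) * (p + q))) := by
    rw [eq_div_iff hE1.ne']; linarith [id1]
  have e2 : c s - c r
      = ((q - abar) * c q - (p - abar) * c p) * ((h - hb) * (r + s))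
        / ((L + h) + (h - hb) * (r * s) - abar * ((h - hb) * (r + s))) := by
    rw [eq_div_iff hE2.ne']; linarith [id2]
  rw [e1, e2, div_lt_div_iff₀ hE1 hE2]
  have hfin := mul_lt_mul_of_pos_left hpsi ht
  ring_nf at hfin ⊢
  linarith [hfin]

private lemma sml_ffCont (hL : 0 < L) (hhb : 0 ≤ hb) (hbh : hb < h) (c : ℝ → ℝ)
    (hc : ∀ α, c α = d / (L + α ^ 2 * hb + (1 - α ^ 2) * h)) :
    ContinuousOn (fun x => (x - abar) * c x) (Set.Icc (0:ℝ) 1) := by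
  have : (fun x => (x - abar) * c x)
      = fun x => (x - abar) * (d / (L + x ^ 2 * hb + (1 - x ^ 2) * h)) :=
    funext fun x => by rw [hc]
  rw [this]
  apply ContinuousOn.mul (by fun_prop)
  exact ContinuousOn.div continuousOn_const (by fun_prop)
    (fun x hx => (sml_denpos L h hb hL hhb hbh hx.1 hx.2).ne')

private lemma sml_sum_update_one {n : ℕ} (F : ℝ → ℝ) (g : Fin n → ℝ) (a : Fin n) (v : ℝ) :
    ∑ l, F (Function.update g a v l) = ∑ l, F (g l) - F (g a) + F v := by
  classical
  have h1 : (fun l => F (Function.update g a v l))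
      = Function.update (fun l => F (g l)) a (F v) := by
    funext l
    by_cases hl : l = a
    · subst hl; simp
    · simp [Function.update_of_ne hl]
  rw [h1, Finset.sum_update_of_mem (Finset.mem_univ a)]
  have h2 := Finset.sum_eq_sum_sdiff_singleton_add (Finset.mem_univ a) (fun l => F (g l))
  rw [h2]; ring

private lemma sml_sum_update_two {n : ℕ} (F : ℝ → ℝ) (g : Fin n → ℝ) (i j : Fin n)
    (hij : i ≠ j) (x y : ℝ) :
    ∑ l, F (Function.update (Function.update g i x) j y l)
      = ∑ l, F (g l) - F (g i) - F (g j) + F x + F y := by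
  rw [sml_sum_update_one, sml_sum_update_one]
  rw [Function.update_of_ne (Ne.symm hij)]
  ring

/-- If some feasible perturbation moves lane `i` down to `x` and lane `j` up to `y`
while preserving the constraint value on these two lanes, we get a contradiction
with optimality. -/
private lemma sml_improve
    (n : ℕ) (hd : 0 < d) (hL : 0 < L) (hhb : 0 ≤ hb) (hbh : hb < h)
    (ha0 : 0 ≤ abar) (ha1 : abar ≤ 1)
    (c : ℝ → ℝ) (hc : ∀ α, c α = d / (L + α ^ 2 * hb + (1 - α ^ 2) * h))
    (αs : Fin n → ℝ)
    (hmem : ∀ i, αs i ∈ Set.Icc (0 : ℝ) 1)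
    (hfeas : ∑ i, (αs i - abar) * c (αs i) = 0)
    (hopt : ∀ β : Fin n → ℝ, (∀ i, β i ∈ Set.Icc (0 : ℝ) 1) →
      (∑ i, (β i - abar) * c (β i) = 0) →
      ∑ i, c (β i) ≤ ∑ i, c (αs i))
    (i j : Fin n) (hij : i ≠ j) (hab : αs i ≤ αs j)
    {x y : ℝ} (hx : x ∈ Set.Icc (0:ℝ) 1) (hy : y ∈ Set.Icc (0:ℝ) 1)
    (hxa : x < αs i) (hby : αs j < y)
    (hsum : (x - abar) * c x + (y - abar) * c y
        = (αs i - abar) * c (αs i) + (αs j - abar) * c (αs j)) : False := by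
  have hkey : c (αs i) - c x < c y - c (αs j) := by
    refine sml_slope_lt abar d L h hb hd hL hhb hbh ha0 ha1 c hc
      hx.1 (hmem i).1 (hmem j).2 hy.2 hxa hby (lt_of_lt_of_le hxa hab)
      (lt_of_le_of_lt hab hby) ?_
    linarith
  have hβmem : ∀ l, Function.update (Function.update αs i x) j y l ∈ Set.Icc (0:ℝ) 1 := by
    intro l
    by_cases hlj : l = j
    · subst hlj; rw [Function.update_self]; exact hy
    · rw [Function.update_of_ne hlj]
      by_cases hli : l = i
      · subst hli; rw [Function.update_self]; exact hx
      · rw [Function.update_of_ne hli]; exact hmem l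
  have h2 := sml_sum_update_two (fun z => (z - abar) * c z) αs i j hij x y
  have hβfeas : ∑ l, (Function.update (Function.update αs i x) j y l - abar)
      * c (Function.update (Function.update αs i x) j y l) = 0 := by
    rw [h2]; linarith [hfeas]
  have hle := hopt _ hβmem hβfeas
  have h3 := sml_sum_update_two c αs i j hij x y
  rw [h3] at hle
  linarith [hle]

end SingleMixedLaneAux

private lemma sml_main
    (n : ℕ) (abar d L h hb : ℝ)
    (habar : abar ∈ Set.Icc (0 : ℝ) 1)
    (hd : 0 < d) (hL : 0 < L) (hhb : 0 ≤ hb) (hbh : hb < h)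
    (c : ℝ → ℝ) (hc : ∀ α, c α = d / (L + α ^ 2 * hb + (1 - α ^ 2) * h))
    (αs : Fin n → ℝ)
    (hmem : ∀ i, αs i ∈ Set.Icc (0 : ℝ) 1)
    (hfeas : ∑ i, (αs i - abar) * c (αs i) = 0)
    (hopt : ∀ β : Fin n → ℝ, (∀ i, β i ∈ Set.Icc (0 : ℝ) 1) →
      (∑ i, (β i - abar) * c (β i) = 0) →
      ∑ i, c (β i) ≤ ∑ i, c (αs i))
    (i j : Fin n) (hij : i ≠ j)
    (hi : αs i ∈ Set.Ioo (0 : ℝ) 1) (hj : αs j ∈ Set.Ioo (0 : ℝ) 1)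
    (hab : αs i ≤ αs j) : False := by
  obtain ⟨ha0, ha1⟩ := habar
  obtain ⟨hia, hib⟩ := hi
  obtain ⟨hja, hjb⟩ := hj
  have hcont := sml_ffCont abar d L h hb hL hhb hbh c hc
  have hmono : ∀ {x y : ℝ}, 0 ≤ x → y ≤ 1 → x < y →
      (x - abar) * c x < (y - abar) * c y :=
    fun hx0 hy1 hxy => sml_fmono abar d L h hb hd hL hhb hbh ha0 ha1 c hc hx0 hy1 hxy
  by_cases hK : (0 - abar) * c 0 + (1 - abar) * c 1
      ≤ (αs i - abar) * c (αs i) + (αs j - abar) * c (αs j)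
  · -- push lane j up to 1 and lane i down to some a'
    have hjlt : (αs j - abar) * c (αs j) < (1 - abar) * c 1 := hmono hja.le le_rfl hjb
    have hva : (αs i - abar) * c (αs i) + (αs j - abar) * c (αs j) - (1 - abar) * c 1
        < (αs i - abar) * c (αs i) := by linarith
    have hv0 : (0 - abar) * c 0
        ≤ (αs i - abar) * c (αs i) + (αs j - abar) * c (αs j) - (1 - abar) * c 1 := by
      linarith
    have hIVT := intermediate_value_Icc hia.le
      (hcont.mono (Set.Icc_subset_Icc le_rfl hib.le))
    obtain ⟨a', ha'mem, ha'eq⟩ := hIVT ⟨hv0, hva.le⟩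
    have ha'lt : a' < αs i := by
      rcases lt_or_eq_of_le ha'mem.2 with h' | h'
      · exact h'
      · exfalso; rw [h'] at ha'eq; simp only at ha'eq; linarith
    simp only at ha'eq
    exact sml_improve abar d L h hb n hd hL hhb hbh ha0 ha1 c hc αs hmem hfeas hopt
      i j hij hab ⟨ha'mem.1, le_trans ha'mem.2 hib.le⟩ ⟨by norm_num, le_rfl⟩
      ha'lt hjb (by linarith)
  · -- push lane i down to 0 and lane j up to some b'
    push_neg at hK
    have hilt : (0 - abar) * c 0 < (αs i - abar) * c (αs i) := hmono le_rfl hib.le hia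
    have hvb : (αs j - abar) * c (αs j)
        < (αs i - abar) * c (αs i) + (αs j - abar) * c (αs j) - (0 - abar) * c 0 := by
      linarith
    have hv1 : (αs i - abar) * c (αs i) + (αs j - abar) * c (αs j) - (0 - abar) * c 0
        ≤ (1 - abar) * c 1 := by linarith
    have hIVT := intermediate_value_Icc hjb.le
      (hcont.mono (Set.Icc_subset_Icc hja.le le_rfl))
    obtain ⟨b', hb'mem, hb'eq⟩ := hIVT ⟨hvb.le, hv1⟩
    have hb'gt : αs j < b' := by
      rcases lt_or_eq_of_le hb'mem.1 with h' | h'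
      · exact h'
      · exfalso; rw [← h'] at hb'eq; simp only at hb'eq; linarith
    simp only at hb'eq
    exact sml_improve abar d L h hb n hd hL hhb hbh ha0 ha1 c hc αs hmem hfeas hopt
      i j hij hab ⟨le_rfl, by norm_num⟩ ⟨le_trans hja.le hb'mem.1, hb'mem.2⟩
      hia hb'gt (by linarith)

/-- Any maximizer of total capacity subject to flow conservation has at most
one mixed lane, i.e. at most one coordinate in the open interval `(0,1)`. -/
theorem single_mixed_lane
    (n : ℕ) (hn : 1 ≤ n) (abar d L h hb : ℝ)
    (habar : abar ∈ Set.Icc (0 : ℝ) 1)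
    (hd : 0 < d) (hL : 0 < L) (hhb : 0 ≤ hb) (hbh : hb < h)
    (c : ℝ → ℝ) (hc : ∀ α, c α = d / (L + α ^ 2 * hb + (1 - α ^ 2) * h))
    (αs : Fin n → ℝ)
    (hmem : ∀ i, αs i ∈ Set.Icc (0 : ℝ) 1)
    (hfeas : ∑ i, (αs i - abar) * c (αs i) = 0)
    (hopt : ∀ β : Fin n → ℝ, (∀ i, β i ∈ Set.Icc (0 : ℝ) 1) →
      (∑ i, (β i - abar) * c (β i) = 0) →
      ∑ i, c (β i) ≤ ∑ i, c (αs i)) :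
    ∀ i j : Fin n, αs i ∈ Set.Ioo (0 : ℝ) 1 → αs j ∈ Set.Ioo (0 : ℝ) 1 →
      i = j := by
  intro i j hi hj
  by_contra hij
  rcases le_total (αs i) (αs j) with hab | hab
  · exact sml_main n abar d L h hb habar hd hL hhb hbh c hc αs hmem hfeas hopt
      i j hij hi hj hab
  · exact sml_main n abar d L h hb habar hd hL hhb hbh c hc αs hmem hfeas hopt
      j i (Ne.symm hij) hj hi hab
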